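/- arXiv:1709.00757 — 3 statements merged into one kernel-verified Lean document; each statement's English description precedes it below -/
import Mathlib

section
/- For every non-autonomous dynamical system f on a compact metric space M and every i ∈ ℤ, the cover entropy equals the spanning-set entropy: sup{ H_i(f,𝒜) : 𝒜 an open cover of M } = H_i(f). -/
open Filter Topology Set

variable {M : Type*} {N : Type*}

/-- The `n`-th composition `f_i^n = f_{i+n-1} ∘ ⋯ ∘ f_i` of a non-autonomous
dynamical system `f = (f_i)_{i ∈ ℤ}` of homeomorphisms of `M`. -/
def nsIter [TopologicalSpace M] (f : ℤ → M ≃ₜ M) (i : ℤ) : ℕ → M → M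
  | 0 => id
  | n + 1 => (f (i + n)) ∘ nsIter f i n

/-- `K` is an `(n, ε)`-spanning set for `f` at time `i`. -/
def IsSpanningSet [PseudoMetricSpace M] (f : ℤ → M ≃ₜ M) (i : ℤ) (n : ℕ) (ε : ℝ)
    (K : Set M) : Prop :=
  ∀ x : M, ∃ y ∈ K, ∀ j < n, dist (nsIter f i j x) (nsIter f i j y) < ε

/-- `E` is an `(n, ε)`-separated set for `f` at time `i`. -/
def IsSeparatedSet [PseudoMetricSpace M] (f : ℤ → M ≃ₜ M) (i : ℤ) (n : ℕ) (ε : ℝ)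
    (E : Set M) : Prop :=
  ∀ x ∈ E, ∀ y ∈ E, x ≠ y → ∃ j < n, ε < dist (nsIter f i j x) (nsIter f i j y)

/-- `r[n,i](ε,f)`: the smallest cardinality of a finite `(n, ε)`-spanning set at time `i`. -/
noncomputable def rSpan [PseudoMetricSpace M] (f : ℤ → M ≃ₜ M) (i : ℤ) (n : ℕ) (ε : ℝ) : ℕ :=
  sInf {k | ∃ K : Finset M, K.card = k ∧ IsSpanningSet f i n ε ↑K}

/-- `s[n,i](ε,f)`: the largest cardinality of an `(n, ε)`-separated set at time `i`. -/
noncomputable def sSep [PseudoMetricSpace M] (f : ℤ → M ≃ₜ M) (i : ℤ) (n : ℕ) (ε : ℝ) : ℕ :=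
  sSup {k | ∃ E : Finset M, E.card = k ∧ IsSeparatedSet f i n ε ↑E}

/-- `r[i](ε,f) = limsup_{n → ∞} (1/n) log r[n,i](ε,f)`. -/
noncomputable def rGrowth [PseudoMetricSpace M] (f : ℤ → M ≃ₜ M) (i : ℤ) (ε : ℝ) : EReal :=
  Filter.atTop.limsup fun n : ℕ => ((Real.log (rSpan f i n ε) / n : ℝ) : EReal)

/-- `s[i](ε,f) = limsup_{n → ∞} (1/n) log s[n,i](ε,f)`. -/
noncomputable def sGrowth [PseudoMetricSpace M] (f : ℤ → M ≃ₜ M) (i : ℤ) (ε : ℝ) : EReal :=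
  Filter.atTop.limsup fun n : ℕ => ((Real.log (sSep f i n ε) / n : ℝ) : EReal)

/-- The topological entropy `H_i(f) = lim_{ε → 0⁺} r[i](ε,f)`; since `ε ↦ r[i](ε,f)` is
antitone, this one-sided limit equals the supremum over `ε > 0`. -/
noncomputable def nsEntropy [PseudoMetricSpace M] (f : ℤ → M ≃ₜ M) (i : ℤ) : EReal :=
  ⨆ (ε : ℝ) (_ : 0 < ε), rGrowth f i ε

/-- `𝒜` is an open cover of `M`: a family of open sets whose union is `M`. -/
def IsOpenCover [TopologicalSpace M] (𝒜 : Set (Set M)) : Prop :=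
  (∀ A ∈ 𝒜, IsOpen A) ∧ ⋃₀ 𝒜 = Set.univ

/-- `N(𝒜)`: the minimal cardinality of a finite subcover of `𝒜`. -/
noncomputable def coverN (𝒜 : Set (Set M)) : ℕ :=
  sInf {k | ∃ ℱ : Finset (Set M), ↑ℱ ⊆ 𝒜 ∧ ⋃₀ (↑ℱ : Set (Set M)) = Set.univ ∧ ℱ.card = k}

/-- The join `⋁_{k=0}^{n-1} (f_i^k)⁻¹(𝒜)`, whose elements are the sets
`⋂_{k<n} (f_i^k)⁻¹(A_k)` with each `A_k ∈ 𝒜`. -/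
def joinCover [TopologicalSpace M] (f : ℤ → M ≃ₜ M) (i : ℤ) (n : ℕ)
    (𝒜 : Set (Set M)) : Set (Set M) :=
  {S | ∃ A : ℕ → Set M, (∀ k < n, A k ∈ 𝒜) ∧ S = ⋂ k ∈ Finset.range n, nsIter f i k ⁻¹' A k}

/-- `H_i(f,𝒜)`: the cover entropy of `f` relative to the open cover `𝒜` at time `i`.
(The `limsup` below is actually a limit, and is finite, for open covers of a compact space.) -/
noncomputable def coverEnt [PseudoMetricSpace M] (f : ℤ → M ≃ₜ M) (i : ℤ)
    (𝒜 : Set (Set M)) : EReal :=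
  Filter.atTop.limsup fun n : ℕ => ((Real.log (coverN (joinCover f i n 𝒜)) / n : ℝ) : EReal)

section Aux

variable [MetricSpace M] [CompactSpace M]

lemma log_nat_mono {m n : ℕ} (h : m ≤ n) : Real.log m ≤ Real.log n := by
  rcases Nat.eq_zero_or_pos m with rfl | hm
  · simpa using Real.log_natCast_nonneg n
  · exact Real.log_le_log (by exact_mod_cast hm) (by exact_mod_cast h)

lemma entSeq_mono {a b : ℕ → ℕ} (h : ∀ n, a n ≤ b n) :
    Filter.atTop.limsup (fun n : ℕ => ((Real.log (a n) / n : ℝ) : EReal)) ≤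
      Filter.atTop.limsup (fun n : ℕ => ((Real.log (b n) / n : ℝ) : EReal)) := by
  refine Filter.limsup_le_limsup (Filter.Eventually.of_forall fun n => ?_)
  apply EReal.coe_le_coe_iff.mpr
  rcases Nat.eq_zero_or_pos n with rfl | hn
  · simp
  · exact (div_le_div_iff_of_pos_right (by exact_mod_cast hn)).mpr (log_nat_mono (h n))

lemma continuous_nsIter (f : ℤ → M ≃ₜ M) (i : ℤ) (n : ℕ) : Continuous (nsIter f i n) := by
  induction n with
  | zero => exact continuous_id
  | succ n ih => exact ((f (i + n)).continuous).comp ih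

lemma exists_spanningFinset (f : ℤ → M ≃ₜ M) (i : ℤ) (n : ℕ) {ε : ℝ} (hε : 0 < ε) :
    ∃ K : Finset M, IsSpanningSet f i n ε ↑K := by
  set U : M → Set M :=
    fun y => ⋂ j ∈ Finset.range n, (nsIter f i j) ⁻¹' Metric.ball (nsIter f i j y) ε with hU
  obtain ⟨t, ht⟩ := isCompact_univ.elim_finite_subcover U
    (fun y => isOpen_biInter_finset fun j _ =>
      (continuous_nsIter f i j).isOpen_preimage _ Metric.isOpen_ball)
    (fun x _ => Set.mem_iUnion.2 ⟨x, by
      simp only [hU, Set.mem_iInter, Set.mem_preimage, Metric.mem_ball]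
      exact fun j _ => by simpa using hε⟩)
  refine ⟨t, fun x => ?_⟩
  obtain ⟨y, hyt, hxy⟩ := Set.mem_iUnion₂.1 (ht (Set.mem_univ x))
  refine ⟨y, hyt, fun j hj => ?_⟩
  have := Set.mem_iInter.1 hxy j
  have := Set.mem_iInter.1 this (Finset.mem_range.2 hj)
  simpa [Metric.mem_ball] using this

lemma rSpan_spec (f : ℤ → M ≃ₜ M) (i : ℤ) (n : ℕ) {ε : ℝ} (hε : 0 < ε) :
    ∃ K : Finset M, K.card = rSpan f i n ε ∧ IsSpanningSet f i n ε ↑K := by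
  have hne : {k | ∃ K : Finset M, K.card = k ∧ IsSpanningSet f i n ε ↑K}.Nonempty := by
    obtain ⟨K, hK⟩ := exists_spanningFinset f i n hε
    exact ⟨K.card, K, rfl, hK⟩
  exact Nat.sInf_mem hne

lemma coverN_spec {𝒜 : Set (Set M)} (h : IsOpenCover 𝒜) :
    ∃ ℱ : Finset (Set M), ↑ℱ ⊆ 𝒜 ∧ ⋃₀ (↑ℱ : Set (Set M)) = Set.univ ∧ ℱ.card = coverN 𝒜 := by
  classical
  have hne : {k | ∃ ℱ : Finset (Set M),
      ↑ℱ ⊆ 𝒜 ∧ ⋃₀ (↑ℱ : Set (Set M)) = Set.univ ∧ ℱ.card = k}.Nonempty := by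
    obtain ⟨t, ht⟩ := isCompact_univ.elim_finite_subcover (fun A : 𝒜 => (A : Set M))
      (fun A => h.1 A A.2) (by rw [← Set.sUnion_eq_iUnion, h.2])
    refine ⟨(t.image Subtype.val).card, t.image Subtype.val, ?_, ?_, rfl⟩
    · intro A hA
      simp only [Finset.coe_image, Set.mem_image, Finset.mem_coe] at hA
      obtain ⟨B, _, rfl⟩ := hA
      exact B.2
    · refine Set.eq_univ_of_forall fun x => ?_
      obtain ⟨B, hBt, hxB⟩ := Set.mem_iUnion₂.1 (ht (Set.mem_univ x))
      exact Set.mem_sUnion.2 ⟨B, Finset.mem_coe.2 (Finset.mem_image.2 ⟨B, hBt, rfl⟩), hxB⟩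
  obtain ⟨ℱ, h1, h2, h3⟩ := Nat.sInf_mem hne
  exact ⟨ℱ, h1, h2, h3⟩

lemma isOpenCover_joinCover (f : ℤ → M ≃ₜ M) (i : ℤ) (n : ℕ) {𝒜 : Set (Set M)}
    (h : IsOpenCover 𝒜) : IsOpenCover (joinCover f i n 𝒜) := by
  constructor
  · rintro S ⟨A, hA, rfl⟩
    exact isOpen_biInter_finset fun k hk =>
      (continuous_nsIter f i k).isOpen_preimage _ (h.1 _ (hA k (Finset.mem_range.1 hk)))
  · refine Set.eq_univ_of_forall fun x => ?_
    have hAk : ∀ k : ℕ, ∃ A ∈ 𝒜, nsIter f i k x ∈ A := fun k => by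
      have : nsIter f i k x ∈ ⋃₀ 𝒜 := by rw [h.2]; trivial
      exact this
    choose A hA hxA using hAk
    refine Set.mem_sUnion.2 ⟨⋂ k ∈ Finset.range n, nsIter f i k ⁻¹' A k,
      ⟨A, fun k _ => hA k, rfl⟩, ?_⟩
    simp only [Set.mem_iInter, Set.mem_preimage]
    exact fun k _ => hxA k

lemma coverEnt_le_nsEntropy (f : ℤ → M ≃ₜ M) (i : ℤ) {𝒜 : Set (Set M)}
    (h𝒜 : IsOpenCover 𝒜) : coverEnt f i 𝒜 ≤ nsEntropy f i := by
  obtain ⟨δ, hδ, hball⟩ :=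
    lebesgue_number_lemma_of_metric_sUnion isCompact_univ h𝒜.1 (by rw [h𝒜.2])
  have key : ∀ n, coverN (joinCover f i n 𝒜) ≤ rSpan f i n δ := by
    intro n
    classical
    obtain ⟨K, hKcard, hKspan⟩ := rSpan_spec f i n hδ
    choose g hg𝒜 hgball using fun x : M => hball x (Set.mem_univ x)
    set S : M → Set M :=
      fun y => ⋂ k ∈ Finset.range n, nsIter f i k ⁻¹' g (nsIter f i k y) with hS
    have hmem : ∀ y, S y ∈ joinCover f i n 𝒜 :=
      fun y => ⟨fun k => g (nsIter f i k y), fun k _ => hg𝒜 _, rfl⟩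
    have hcov : ⋃₀ (↑(K.image S) : Set (Set M)) = Set.univ := by
      refine Set.eq_univ_of_forall fun x => ?_
      obtain ⟨y, hyK, hy⟩ := hKspan x
      refine Set.mem_sUnion.2 ⟨S y, Finset.mem_coe.2 (Finset.mem_image.2 ⟨y, hyK, rfl⟩), ?_⟩
      simp only [hS, Set.mem_iInter, Set.mem_preimage, Finset.mem_range]
      intro k hk
      exact hgball _ (Metric.mem_ball.2 (hy k hk))
    calc coverN (joinCover f i n 𝒜) ≤ (K.image S).card := by
          refine Nat.sInf_le ⟨K.image S, ?_, hcov, rfl⟩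
          intro T hT
          simp only [Finset.coe_image, Set.mem_image, Finset.mem_coe] at hT
          obtain ⟨y, _, rfl⟩ := hT
          exact hmem y
      _ ≤ K.card := Finset.card_image_le
      _ = rSpan f i n δ := hKcard
  calc coverEnt f i 𝒜 ≤ rGrowth f i δ := entSeq_mono key
    _ ≤ nsEntropy f i := le_iSup₂ (f := fun (ε : ℝ) (_ : 0 < ε) => rGrowth f i ε) δ hδ

lemma rGrowth_le_iSup [Nonempty M] (f : ℤ → M ≃ₜ M) (i : ℤ) {ε : ℝ} (hε : 0 < ε) :
    rGrowth f i ε ≤ ⨆ (𝒜 : Set (Set M)) (_ : IsOpenCover 𝒜), coverEnt f i 𝒜 := by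
  classical
  set 𝒜 : Set (Set M) := Set.range (fun x => Metric.ball x (ε/2)) with h𝒜def
  have h𝒜 : IsOpenCover 𝒜 := by
    constructor
    · rintro A ⟨x, rfl⟩; exact Metric.isOpen_ball
    · exact Set.eq_univ_of_forall fun x =>
        Set.mem_sUnion.2 ⟨Metric.ball x (ε/2), ⟨x, rfl⟩, Metric.mem_ball_self (by linarith)⟩
  have key : ∀ n, rSpan f i n ε ≤ coverN (joinCover f i n 𝒜) := by
    intro n
    obtain ⟨ℱ, hℱsub, hℱcov, hℱcard⟩ := coverN_spec (isOpenCover_joinCover f i n h𝒜)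
    set pick : Set M → M := fun T => if h : T.Nonempty then h.some else Classical.arbitrary M
      with hpick
    set K := (ℱ.filter (fun T => T.Nonempty)).image pick with hK
    have hspan : IsSpanningSet f i n ε ↑K := by
      intro x
      have hx : x ∈ ⋃₀ (↑ℱ : Set (Set M)) := by rw [hℱcov]; trivial
      obtain ⟨T, hTℱ, hxT⟩ := hx
      have hTne : T.Nonempty := ⟨x, hxT⟩
      have hyT : pick T ∈ T := by
        simp only [hpick, dif_pos hTne]; exact hTne.some_mem
      refine ⟨pick T, Finset.mem_coe.2 (Finset.mem_image.2
        ⟨T, Finset.mem_filter.2 ⟨Finset.mem_coe.1 hTℱ, hTne⟩, rfl⟩), fun j hj => ?_⟩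
      obtain ⟨A, hA, hTeq⟩ := hℱsub hTℱ
      have hxT' : x ∈ ⋂ k ∈ Finset.range n, nsIter f i k ⁻¹' A k := by
        rw [← hTeq]; exact hxT
      have hyT' : pick T ∈ ⋂ k ∈ Finset.range n, nsIter f i k ⁻¹' A k := by
        rw [← hTeq]; exact hyT
      have hx' : nsIter f i j x ∈ A j :=
        Set.mem_iInter.1 (Set.mem_iInter.1 hxT' j) (Finset.mem_range.2 hj)
      have hy' : nsIter f i j (pick T) ∈ A j :=
        Set.mem_iInter.1 (Set.mem_iInter.1 hyT' j) (Finset.mem_range.2 hj)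
      obtain ⟨c, hc⟩ := hA j hj
      rw [← hc] at hx' hy'
      have h1 : dist (nsIter f i j x) c < ε/2 := Metric.mem_ball.1 hx'
      have h2 : dist (nsIter f i j (pick T)) c < ε/2 := Metric.mem_ball.1 hy'
      calc dist (nsIter f i j x) (nsIter f i j (pick T))
          ≤ dist (nsIter f i j x) c + dist (nsIter f i j (pick T)) c := dist_triangle_right _ _ _
        _ < ε := by linarith
    calc rSpan f i n ε ≤ K.card := Nat.sInf_le ⟨K, rfl, hspan⟩
      _ ≤ (ℱ.filter (fun T => T.Nonempty)).card := Finset.card_image_le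
      _ ≤ ℱ.card := Finset.card_filter_le _ _
      _ = coverN (joinCover f i n 𝒜) := hℱcard
  calc rGrowth f i ε ≤ coverEnt f i 𝒜 := entSeq_mono key
    _ ≤ ⨆ (𝒜 : Set (Set M)) (_ : IsOpenCover 𝒜), coverEnt f i 𝒜 :=
      le_iSup₂ (f := fun (𝒜 : Set (Set M)) (_ : IsOpenCover 𝒜) => coverEnt f i 𝒜) 𝒜 h𝒜

end Aux

/-- for every non-autonomous dynamical system `f` on a compact metric space `M`
and every `i ∈ ℤ`, the cover entropy equals the spanning-set entropy:
`sup { H_i(f,𝒜) : 𝒜 an open cover of M } = H_i(f)`. -/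
theorem iSup_coverEnt_eq_nsEntropy [MetricSpace M] [CompactSpace M]
    (f : ℤ → M ≃ₜ M) (i : ℤ) :
    (⨆ (𝒜 : Set (Set M)) (_ : IsOpenCover 𝒜), coverEnt f i 𝒜) = nsEntropy f i := by
  rcases isEmpty_or_nonempty M with hM | hM
  · have huniv : (Set.univ : Set M) = ∅ := Set.univ_eq_empty_iff.2 hM
    have hcov : ∀ (𝒜 : Set (Set M)) (n : ℕ), coverN (joinCover f i n 𝒜) = 0 := fun 𝒜 n =>
      Nat.sInf_eq_zero.2 (Or.inl ⟨∅, by simp, by simp [huniv], rfl⟩)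
    have hspan : ∀ (n : ℕ) (ε : ℝ), rSpan f i n ε = 0 := fun n ε =>
      Nat.sInf_eq_zero.2 (Or.inl ⟨∅, rfl, fun x => isEmptyElim x⟩)
    have h1 : ∀ 𝒜 : Set (Set M), coverEnt f i 𝒜 = 0 := by
      intro 𝒜
      have : (fun n : ℕ => ((Real.log (coverN (joinCover f i n 𝒜)) / n : ℝ) : EReal))
          = fun _ => (0 : EReal) := by funext n; simp [hcov]
      rw [coverEnt, this, Filter.limsup_const]
    have h2 : ∀ ε : ℝ, rGrowth f i ε = 0 := by
      intro ε
      have : (fun n : ℕ => ((Real.log (rSpan f i n ε) / n : ℝ) : EReal))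
          = fun _ => (0 : EReal) := by funext n; simp [hspan]
      rw [rGrowth, this, Filter.limsup_const]
    have hOC : IsOpenCover (∅ : Set (Set M)) :=
      ⟨fun A hA => absurd hA (Set.notMem_empty A), by simp [huniv]⟩
    apply le_antisymm
    · refine iSup₂_le fun 𝒜 _ => ?_
      rw [h1]
      calc (0 : EReal) = rGrowth f i 1 := (h2 1).symm
        _ ≤ nsEntropy f i := le_iSup₂ (f := fun (ε : ℝ) (_ : 0 < ε) => rGrowth f i ε) 1 one_pos
    · refine iSup₂_le fun ε hε => ?_
      rw [h2]
      calc (0 : EReal) = coverEnt f i (∅ : Set (Set M)) := (h1 ∅).symm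
        _ ≤ _ := le_iSup₂ (f := fun (𝒜 : Set (Set M)) (_ : IsOpenCover 𝒜) => coverEnt f i 𝒜)
            ∅ hOC
  · apply le_antisymm
    · exact iSup₂_le fun 𝒜 h => coverEnt_le_nsEntropy f i h
    · exact iSup₂_le fun ε hε => rGrowth_le_iSup f i hε
end

section
/- If f (on a compact metric space M) and g (on a compact metric space N) are uniformly conjugate non-autonomous dynamical systems, then H_i(f) = H_i(g) for every i ∈ ℤ. -/
open Filter Topology Set

variable {M : Type*} {N : Type*}

lemma nsIter_continuous [TopologicalSpace M] (f : ℤ → M ≃ₜ M) (i : ℤ) (n : ℕ) :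
    Continuous (nsIter f i n) := by
  induction n with
  | zero => exact continuous_id
  | succ n ih => exact (f (i + n)).continuous.comp ih

lemma nsIter_conj [TopologicalSpace M] [TopologicalSpace N]
    (f : ℤ → M ≃ₜ M) (g : ℤ → N ≃ₜ N) (h : ℤ → M ≃ₜ N)
    (hconj : ∀ i : ℤ, ∀ x : M, h (i + 1) (f i x) = g i (h i x)) (i : ℤ) :
    ∀ (n : ℕ) (x : M), h (i + n) (nsIter f i n x) = nsIter g i n (h i x) := by
  intro n
  induction n with
  | zero => intro x; simp [nsIter]
  | succ n ih =>
    intro x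
    have hcast : (i + ((n : ℤ) + 1)) = (i + n) + 1 := by ring
    simp only [nsIter, Function.comp_apply, Nat.cast_succ, hcast]
    rw [hconj (i + n), ih]

/-- uniform equicontinuity of the first `n` iterates -/
lemma exists_delta_iter [MetricSpace M] [CompactSpace M] (f : ℤ → M ≃ₜ M) (i : ℤ) (n : ℕ)
    {δ : ℝ} (hδ : 0 < δ) :
    ∃ δ' > 0, ∀ x y : M, dist x y < δ' → ∀ j < n,
      dist (nsIter f i j x) (nsIter f i j y) < δ := by
  induction n with
  | zero => exact ⟨δ, hδ, fun x y _ j hj => absurd hj (Nat.not_lt_zero j)⟩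
  | succ n ih =>
    obtain ⟨δ₁, hδ₁, H₁⟩ := ih
    have hu : UniformContinuous (nsIter f i n) :=
      CompactSpace.uniformContinuous_of_continuous (nsIter_continuous f i n)
    obtain ⟨δ₂, hδ₂, H₂⟩ := Metric.uniformContinuous_iff.mp hu δ hδ
    refine ⟨min δ₁ δ₂, lt_min hδ₁ hδ₂, fun x y hxy j hj => ?_⟩
    rcases Nat.lt_succ_iff_lt_or_eq.mp hj with hj | rfl
    · exact H₁ x y (hxy.trans_le (min_le_left _ _)) j hj
    · exact H₂ (hxy.trans_le (min_le_right _ _))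

lemma exists_spanning_finset [MetricSpace M] [CompactSpace M] (f : ℤ → M ≃ₜ M) (i : ℤ) (n : ℕ)
    {δ : ℝ} (hδ : 0 < δ) : ∃ K : Finset M, IsSpanningSet f i n δ ↑K := by
  obtain ⟨δ', hδ', H⟩ := exists_delta_iter f i n hδ
  obtain ⟨t, ht⟩ := isCompact_univ.elim_finite_subcover (fun x : M => Metric.ball x δ')
    (fun x => Metric.isOpen_ball) (fun x _ => mem_iUnion.mpr ⟨x, Metric.mem_ball_self hδ'⟩)
  refine ⟨t, fun x => ?_⟩
  obtain ⟨y, hy, hxy⟩ := mem_iUnion₂.mp (ht (mem_univ x))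
  exact ⟨y, hy, H x y (Metric.mem_ball.mp hxy)⟩

open Classical in
lemma rSpan_le_of_conj [MetricSpace M] [CompactSpace M] [MetricSpace N]
    (f : ℤ → M ≃ₜ M) (g : ℤ → N ≃ₜ N) (h : ℤ → M ≃ₜ N)
    (hconj : ∀ i : ℤ, ∀ x : M, h (i + 1) (f i x) = g i (h i x))
    (i : ℤ) (n : ℕ) {ε δ : ℝ} (hδ : 0 < δ)
    (hd : ∀ i : ℤ, ∀ x y : M, dist x y < δ → dist (h i x) (h i y) < ε) :
    rSpan g i n ε ≤ rSpan f i n δ := by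
  obtain ⟨K, hK⟩ := exists_spanning_finset f i n hδ
  have hne : {k | ∃ K : Finset M, K.card = k ∧ IsSpanningSet f i n δ ↑K}.Nonempty :=
    ⟨K.card, K, rfl, hK⟩
  obtain ⟨K₀, hK₀card, hK₀⟩ := Nat.sInf_mem hne
  have hspan : IsSpanningSet g i n ε ↑(K₀.image (h i)) := by
    intro u
    obtain ⟨y, hy, hylt⟩ := hK₀ ((h i).symm u)
    refine ⟨h i y, Finset.mem_coe.mpr (Finset.mem_image_of_mem _ hy), fun j hj => ?_⟩
    have e1 := nsIter_conj f g h hconj i j ((h i).symm u)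
    have e2 := nsIter_conj f g h hconj i j y
    rw [(h i).apply_symm_apply] at e1
    rw [← e1, ← e2]
    exact hd _ _ _ (hylt j hj)
  calc rSpan g i n ε ≤ (K₀.image (h i)).card := Nat.sInf_le ⟨K₀.image (h i), rfl, hspan⟩
    _ ≤ K₀.card := Finset.card_image_le
    _ = rSpan f i n δ := hK₀card

lemma log_nat_mono_s4 {a b : ℕ} (hab : a ≤ b) : Real.log a ≤ Real.log b := by
  rcases Nat.eq_zero_or_pos a with rfl | ha
  · rcases Nat.eq_zero_or_pos b with rfl | hb
    · exact le_refl _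
    · simpa using Real.log_natCast_nonneg b
  · exact Real.log_le_log (by exact_mod_cast ha) (by exact_mod_cast hab)

lemma rGrowth_le_of_conj [MetricSpace M] [CompactSpace M] [MetricSpace N]
    (f : ℤ → M ≃ₜ M) (g : ℤ → N ≃ₜ N) (h : ℤ → M ≃ₜ N)
    (hconj : ∀ i : ℤ, ∀ x : M, h (i + 1) (f i x) = g i (h i x))
    (i : ℤ) {ε δ : ℝ} (hδ : 0 < δ)
    (hd : ∀ i : ℤ, ∀ x y : M, dist x y < δ → dist (h i x) (h i y) < ε) :
    rGrowth g i ε ≤ rGrowth f i δ := by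
  refine Filter.limsup_le_limsup (Eventually.of_forall fun n => ?_)
  rcases Nat.eq_zero_or_pos n with rfl | hn
  · simp
  · have hle : Real.log (rSpan g i n ε) / n ≤ Real.log (rSpan f i n δ) / n :=
      (div_le_div_iff_of_pos_right (by exact_mod_cast hn)).mpr
        (log_nat_mono_s4 (rSpan_le_of_conj f g h hconj i n hδ hd))
    exact EReal.coe_le_coe_iff.mpr hle

lemma nsEntropy_le_of_conj [MetricSpace M] [CompactSpace M] [MetricSpace N]
    (f : ℤ → M ≃ₜ M) (g : ℤ → N ≃ₜ N) (h : ℤ → M ≃ₜ N)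
    (hconj : ∀ i : ℤ, ∀ x : M, h (i + 1) (f i x) = g i (h i x))
    (hequi : ∀ ε > (0 : ℝ), ∃ δ > (0 : ℝ), ∀ i : ℤ, ∀ x y : M,
      dist x y < δ → dist (h i x) (h i y) < ε)
    (i : ℤ) : nsEntropy g i ≤ nsEntropy f i := by
  refine iSup₂_le fun ε hε => ?_
  obtain ⟨δ, hδ, hd⟩ := hequi ε hε
  calc rGrowth g i ε ≤ rGrowth f i δ := rGrowth_le_of_conj f g h hconj i hδ hd
    _ ≤ nsEntropy f i := le_iSup₂ (f := fun (ε : ℝ) (_ : 0 < ε) => rGrowth f i ε) δ hδ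

/-- if `f` (on a compact metric space `M`) and `g` (on a compact metric space `N`)
are uniformly conjugate non-autonomous dynamical systems, then `H_i(f) = H_i(g)` for every
`i ∈ ℤ`. -/
theorem nsEntropy_eq_of_uniformConjugacy [MetricSpace M] [CompactSpace M]
    [MetricSpace N] [CompactSpace N]
    (f : ℤ → M ≃ₜ M) (g : ℤ → N ≃ₜ N) (h : ℤ → M ≃ₜ N)
    (hconj : ∀ i : ℤ, ∀ x : M, h (i + 1) (f i x) = g i (h i x))
    (hequi : ∀ ε > (0 : ℝ), ∃ δ > (0 : ℝ), ∀ i : ℤ, ∀ x y : M,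
      dist x y < δ → dist (h i x) (h i y) < ε)
    (hequi' : ∀ ε > (0 : ℝ), ∃ δ > (0 : ℝ), ∀ i : ℤ, ∀ u v : N,
      dist u v < δ → dist ((h i).symm u) ((h i).symm v) < ε)
    (i : ℤ) : nsEntropy f i = nsEntropy g i := by
  have hconj' : ∀ i : ℤ, ∀ u : N, (h (i + 1)).symm (g i u) = f i ((h i).symm u) := by
    intro i u
    have := hconj i ((h i).symm u)
    rw [(h i).apply_symm_apply] at this
    rw [← this, (h (i + 1)).symm_apply_apply]
  exact le_antisymm
    (nsEntropy_le_of_conj g f (fun j => (h j).symm) hconj' hequi' i)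
    (nsEntropy_le_of_conj f g h hconj hequi i)
end

section
/- Let M be a compact metric space and φ a homeomorphism of M with h(φ) ≠ 0. Define the non-autonomous dynamical system f by f_i = id for i ≥ 0 and f_i = φ for i < 0. Then H_i(f) = 0 for every i ∈ ℤ, while the entropy of the inverse system satisfies H^{(-1)}(f) = h(φ) ≠ 0. In particular, there exists a non-autonomous dynamical system whose entropy differs from the entropy of its inverse. -/
open Filter Topology Set

variable {M : Type*} {N : Type*}

/-- The smallest cardinality of a finite `(n, ε)`-spanning set for a single map `φ : M → M`
(Bowen): a set `K` such that every `x ∈ M` has `y ∈ K` with `dist (φ^j x) (φ^j y) < ε`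
for all `0 ≤ j < n`. -/
noncomputable def minSpanMap [PseudoMetricSpace M] (φ : M → M) (n : ℕ) (ε : ℝ) : ℕ :=
  sInf {k | ∃ K : Finset M, K.card = k ∧
    ∀ x : M, ∃ y ∈ K, ∀ j < n, dist (φ^[j] x) (φ^[j] y) < ε}

/-- Bowen's topological entropy `h(φ)` of a single map `φ : M → M`:
`h(φ) = lim_{ε → 0⁺} limsup_{n → ∞} (1/n) log` of the minimal cardinality of an
`(n, ε)`-spanning set; the one-sided limit equals the supremum over `ε > 0`. -/
noncomputable def mapEntropy [PseudoMetricSpace M] (φ : M → M) : EReal :=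
  ⨆ (ε : ℝ) (_ : 0 < ε),
    Filter.atTop.limsup fun n : ℕ => ((Real.log (minSpanMap φ n ε) / n : ℝ) : EReal)


set_option linter.unusedSectionVars false
section Aux
variable {M : Type*} [MetricSpace M] [CompactSpace M]

lemma lognat_mono {a b : ℕ} (h : a ≤ b) : Real.log a ≤ Real.log b := by
  rcases Nat.eq_zero_or_pos a with ha | ha
  · subst ha; simpa using Real.log_natCast_nonneg b
  · exact Real.log_le_log (by exact_mod_cast ha) (by exact_mod_cast h)

lemma limsup_log_div_zero (u : ℕ → ℕ) (C : ℕ) (h : ∀ n, u n ≤ C) :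
    Filter.atTop.limsup (fun n : ℕ => ((Real.log (u n) / n : ℝ) : EReal)) = 0 := by
  have ht : Tendsto (fun n : ℕ => Real.log (u n) / n) atTop (nhds 0) := by
    apply squeeze_zero (g := fun n : ℕ => Real.log (C + 1) / n)
    · intro n; exact div_nonneg (Real.log_natCast_nonneg _) (Nat.cast_nonneg _)
    · intro n
      exact div_le_div_of_nonneg_right (by have := lognat_mono ((h n).trans (Nat.le_succ C)); push_cast at this ⊢; exact this)
        (Nat.cast_nonneg _)
    · exact tendsto_const_div_atTop_nhds_zero_nat _
  have : Tendsto (fun n : ℕ => ((Real.log (u n) / n : ℝ) : EReal)) atTop (nhds ((0:ℝ) : EReal)) :=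
    EReal.tendsto_coe.mpr ht
  rw [show ((0:ℝ):EReal) = (0:EReal) by norm_cast] at this
  exact this.limsup_eq

lemma unif_iter (ψ : M → M) (hψ : Continuous ψ) (n : ℕ) {ε : ℝ} (hε : 0 < ε) :
    ∃ δ > 0, δ ≤ ε ∧ ∀ a b : M, dist a b < δ → ∀ k < n, dist (ψ^[k] a) (ψ^[k] b) < ε := by
  induction n with
  | zero => exact ⟨ε, hε, le_refl _, fun a b _ k hk => absurd hk (Nat.not_lt_zero k)⟩
  | succ n ih =>
    obtain ⟨δ₀, hδ₀, hδ₀ε, h₀⟩ := ih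
    have hc : UniformContinuous (ψ^[n]) :=
      CompactSpace.uniformContinuous_of_continuous (hψ.iterate n)
    obtain ⟨δ₁, hδ₁, h₁⟩ := Metric.uniformContinuous_iff.mp hc ε hε
    refine ⟨min δ₀ δ₁, lt_min hδ₀ hδ₁, (min_le_left _ _).trans hδ₀ε, fun a b hab k hk => ?_⟩
    rcases Nat.lt_succ_iff_lt_or_eq.mp hk with hk | rfl
    · exact h₀ a b (hab.trans_le (min_le_left _ _)) k hk
    · exact h₁ (hab.trans_le (min_le_right _ _))

lemma exists_net {δ : ℝ} (hδ : 0 < δ) : ∃ K : Finset M, ∀ x : M, ∃ y ∈ K, dist x y < δ := by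
  obtain ⟨t, ht, hcov⟩ := Metric.totallyBounded_iff.mp (isCompact_univ : IsCompact (univ : Set M)).totallyBounded δ hδ
  refine ⟨ht.toFinset, fun x => ?_⟩
  have hx := hcov (mem_univ x)
  simp only [mem_iUnion] at hx
  obtain ⟨y, hy, hxy⟩ := hx
  exact ⟨y, ht.mem_toFinset.mpr hy, Metric.mem_ball.mp hxy⟩

lemma exists_mapSpan (ψ : M → M) (hψ : Continuous ψ) (n : ℕ) {ε : ℝ} (hε : 0 < ε) :
    ∃ K : Finset M, ∀ x : M, ∃ y ∈ K, ∀ j < n, dist (ψ^[j] x) (ψ^[j] y) < ε := by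
  obtain ⟨δ, hδ, _, hδ'⟩ := unif_iter ψ hψ n hε
  obtain ⟨K, hK⟩ := exists_net (M := M) hδ
  refine ⟨K, fun x => ?_⟩
  obtain ⟨y, hy, hxy⟩ := hK x
  exact ⟨y, hy, fun j hj => hδ' x y hxy j hj⟩

lemma sInf_le_sInf_of_subset' {S T : Set ℕ} (h : S ⊆ T) (hS : S.Nonempty) : sInf T ≤ sInf S :=
  Nat.sInf_le (h (Nat.sInf_mem hS))


lemma minSpan_mono (ψ : M → M) (hψ : Continuous ψ) {a b : ℕ} (hab : a ≤ b) {ε : ℝ}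
    (hε : 0 < ε) : minSpanMap ψ a ε ≤ minSpanMap ψ b ε := by
  apply sInf_le_sInf_of_subset'
  · rintro k ⟨K, hKc, hK⟩
    exact ⟨K, hKc, fun x => (hK x).imp fun y ⟨hy, h⟩ =>
      ⟨hy, fun j hj => h j (hj.trans_le hab)⟩⟩
  · obtain ⟨K, hK⟩ := exists_mapSpan ψ hψ b hε
    exact ⟨K.card, K, rfl, hK⟩

lemma minSpan_add_le (ψ : M → M) (hψ : Continuous ψ) (m : ℕ) {ε : ℝ} (hε : 0 < ε) :
    ∃ δ, 0 < δ ∧ δ ≤ ε ∧ ∀ n : ℕ, 1 ≤ n → minSpanMap ψ (n + m) ε ≤ minSpanMap ψ n δ := by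
  obtain ⟨δ, hδ, hδε, hδ'⟩ := unif_iter ψ hψ (m + 1) hε
  refine ⟨δ, hδ, hδε, fun n hn => ?_⟩
  apply sInf_le_sInf_of_subset'
  · rintro k ⟨K, hKc, hK⟩
    refine ⟨K, hKc, fun x => ?_⟩
    obtain ⟨y, hy, hspan⟩ := hK x
    refine ⟨y, hy, fun j hj => ?_⟩
    by_cases hjn : j < n
    · exact lt_of_lt_of_le (hspan j hjn) hδε
    · push_neg at hjn
      have h1 : j = (j - (n - 1)) + (n - 1) := by omega
      have h2 : dist (ψ^[n-1] x) (ψ^[n-1] y) < δ := hspan _ (by omega)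
      have h3 := hδ' _ _ h2 (j - (n - 1)) (by omega)
      rw [h1, Function.iterate_add_apply, Function.iterate_add_apply]
      exact h3
  · obtain ⟨K, hK⟩ := exists_mapSpan ψ hψ n hδ
    exact ⟨K.card, K, rfl, hK⟩

lemma minSpan_symm_le (φ : M ≃ₜ M) (n : ℕ) {ε : ℝ} (hε : 0 < ε) :
    minSpanMap (⇑φ.symm) n ε ≤ minSpanMap (⇑φ) n ε := by
  classical
  rcases Nat.eq_zero_or_pos n with rfl | hn
  · apply le_of_eq
    unfold minSpanMap
    congr 1
    ext k
    simp [Nat.not_lt_zero]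
  · have hne : {k | ∃ K : Finset M, K.card = k ∧
        ∀ x : M, ∃ y ∈ K, ∀ j < n, dist ((⇑φ)^[j] x) ((⇑φ)^[j] y) < ε}.Nonempty := by
      obtain ⟨K, hK⟩ := exists_mapSpan (⇑φ) φ.continuous n hε
      exact ⟨K.card, K, rfl, hK⟩
    obtain ⟨K, hKc, hK⟩ := Nat.sInf_mem hne
    have key : ∀ (w : M) (j : ℕ), j ≤ n - 1 →
        (⇑φ.symm)^[j] ((⇑φ)^[n-1] w) = (⇑φ)^[n-1-j] w := by
      intro w j hj
      have h : (⇑φ)^[n-1] w = (⇑φ)^[j] ((⇑φ)^[n-1-j] w) := by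
        rw [← Function.iterate_add_apply]
        congr 1
        omega
      rw [h]
      exact (Function.LeftInverse.iterate φ.symm_apply_apply j) _
    have hxeq : ∀ x : M, (⇑φ)^[n-1] ((⇑φ.symm)^[n-1] x) = x := fun x =>
      (Function.LeftInverse.iterate φ.apply_symm_apply (n-1)) x
    have hspan : ∀ x : M, ∃ y ∈ K.image ((⇑φ)^[n-1]),
        ∀ j < n, dist ((⇑φ.symm)^[j] x) ((⇑φ.symm)^[j] y) < ε := by
      intro x
      obtain ⟨y, hy, h⟩ := hK ((⇑φ.symm)^[n-1] x)
      refine ⟨(⇑φ)^[n-1] y, Finset.mem_image_of_mem _ hy, fun j hj => ?_⟩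
      have e1 : (⇑φ.symm)^[j] x = (⇑φ)^[n-1-j] ((⇑φ.symm)^[n-1] x) := by
        conv_lhs => rw [← hxeq x]
        exact key _ j (by omega)
      rw [e1, key y j (by omega)]
      exact h (n - 1 - j) (by omega)
    calc minSpanMap (⇑φ.symm) n ε ≤ (K.image ((⇑φ)^[n-1])).card :=
          Nat.sInf_le ⟨K.image ((⇑φ)^[n-1]), rfl, hspan⟩
      _ ≤ K.card := Finset.card_image_le
      _ = minSpanMap (⇑φ) n ε := hKc

lemma minSpan_symm (φ : M ≃ₜ M) (n : ℕ) {ε : ℝ} (hε : 0 < ε) :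
    minSpanMap (⇑φ.symm) n ε = minSpanMap (⇑φ) n ε := by
  refine le_antisymm (minSpan_symm_le φ n hε) ?_
  have h := minSpan_symm_le φ.symm n hε
  rwa [Homeomorph.symm_symm] at h

lemma mapEntropy_symm (φ : M ≃ₜ M) : mapEntropy (⇑φ.symm) = mapEntropy (⇑φ) := by
  have h : ∀ ε : ℝ, 0 < ε →
      (Filter.atTop.limsup fun n : ℕ => ((Real.log (minSpanMap (⇑φ.symm) n ε) / n : ℝ) : EReal)) =
      Filter.atTop.limsup fun n : ℕ => ((Real.log (minSpanMap (⇑φ) n ε) / n : ℝ) : EReal) := by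
    intro ε hε
    congr 1
    funext n
    rw [minSpan_symm φ n hε]
  unfold mapEntropy
  apply le_antisymm
  · exact iSup₂_le fun ε hε => (h ε hε).le.trans (le_iSup₂ (f := fun (ε : ℝ) (_ : 0 < ε) =>
      Filter.atTop.limsup fun n : ℕ => ((Real.log (minSpanMap (⇑φ) n ε) / n : ℝ) : EReal)) ε hε)
  · exact iSup₂_le fun ε hε => (h ε hε).ge.trans (le_iSup₂ (f := fun (ε : ℝ) (_ : 0 < ε) =>
      Filter.atTop.limsup fun n : ℕ => ((Real.log (minSpanMap (⇑φ.symm) n ε) / n : ℝ) : EReal)) ε hε)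

lemma nsIter_succ' (f : ℤ → M ≃ₜ M) (i : ℤ) (n : ℕ) :
    nsIter f i (n + 1) = (⇑(f (i + n))) ∘ nsIter f i n := rfl

lemma nsIter_f (φ : M ≃ₜ M) (f : ℤ → M ≃ₜ M)
    (hf₀ : ∀ i : ℤ, 0 ≤ i → f i = Homeomorph.refl M)
    (hf₁ : ∀ i : ℤ, i < 0 → f i = φ) (i : ℤ) (j : ℕ) :
    nsIter f i j = (⇑φ)^[min j (-i).toNat] := by
  induction j with
  | zero => simp [nsIter]
  | succ j ih =>
    rw [nsIter_succ', ih]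
    by_cases h : i + (j : ℤ) < 0
    · rw [hf₁ _ h]
      have h1 : min j (-i).toNat = j := by omega
      have h2 : min (j + 1) (-i).toNat = j + 1 := by omega
      rw [h1, h2, ← Function.iterate_succ']
    · push_neg at h
      rw [hf₀ _ h]
      have h1 : min (j + 1) (-i).toNat = min j (-i).toNat := by omega
      rw [h1]
      simp

lemma nsIter_g (φ : M ≃ₜ M) (f : ℤ → M ≃ₜ M)
    (hf₀ : ∀ i : ℤ, 0 ≤ i → f i = Homeomorph.refl M)
    (hf₁ : ∀ i : ℤ, i < 0 → f i = φ) (i : ℤ) (j : ℕ) :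
    nsIter (fun j : ℤ => (f (-j)).symm) i j = (⇑φ.symm)^[j - (1 - i).toNat] := by
  induction j with
  | zero => simp [nsIter]
  | succ j ih =>
    rw [nsIter_succ', ih]
    by_cases h : i + (j : ℤ) ≤ 0
    · rw [hf₀ (-(i + (j : ℤ))) (by omega)]
      have h1 : j + 1 - (1 - i).toNat = j - (1 - i).toNat := by omega
      rw [h1]
      simp
    · rw [hf₁ (-(i + (j : ℤ))) (by omega)]
      have h1 : j + 1 - (1 - i).toNat = (j - (1 - i).toNat) + 1 := by omega
      rw [h1, ← Function.iterate_succ']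

lemma rGrowth_f_zero (φ : M ≃ₜ M) (f : ℤ → M ≃ₜ M)
    (hf₀ : ∀ i : ℤ, 0 ≤ i → f i = Homeomorph.refl M)
    (hf₁ : ∀ i : ℤ, i < 0 → f i = φ) (i : ℤ) (ε : ℝ) (hε : 0 < ε) :
    rGrowth f i ε = 0 := by
  obtain ⟨δ, hδ, hδε, hδ'⟩ := unif_iter (⇑φ) φ.continuous ((-i).toNat + 1) hε
  obtain ⟨K, hK⟩ := exists_net (M := M) hδ
  have hb : ∀ n, rSpan f i n ε ≤ K.card := by
    intro n
    apply Nat.sInf_le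
    refine ⟨K, rfl, fun x => ?_⟩
    obtain ⟨y, hy, hxy⟩ := hK x
    refine ⟨y, hy, fun j hj => ?_⟩
    rw [nsIter_f φ f hf₀ hf₁]
    exact hδ' x y hxy _ (by omega)
  exact limsup_log_div_zero _ _ hb

lemma nsEntropy_f_zero (φ : M ≃ₜ M) (f : ℤ → M ≃ₜ M)
    (hf₀ : ∀ i : ℤ, 0 ≤ i → f i = Homeomorph.refl M)
    (hf₁ : ∀ i : ℤ, i < 0 → f i = φ) (i : ℤ) : nsEntropy f i = 0 := by
  have h := rGrowth_f_zero φ f hf₀ hf₁ i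
  unfold nsEntropy
  apply le_antisymm
  · exact iSup₂_le fun ε hε => le_of_eq (h ε hε)
  · calc (0 : EReal) = rGrowth f i 1 := (h 1 one_pos).symm
      _ ≤ _ := le_iSup₂ (f := fun (ε : ℝ) (_ : 0 < ε) => rGrowth f i ε) 1 one_pos

lemma rSpan_g_eq (φ : M ≃ₜ M) (f : ℤ → M ≃ₜ M)
    (hf₀ : ∀ i : ℤ, 0 ≤ i → f i = Homeomorph.refl M)
    (hf₁ : ∀ i : ℤ, i < 0 → f i = φ) (i : ℤ) (n : ℕ) (hn : (1 - i).toNat < n) (ε : ℝ) :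
    rSpan (fun j : ℤ => (f (-j)).symm) i n ε = minSpanMap (⇑φ.symm) (n - (1 - i).toNat) ε := by
  unfold rSpan minSpanMap IsSpanningSet
  congr 1
  ext k
  constructor
  · rintro ⟨K, hKc, hK⟩
    refine ⟨K, hKc, fun x => ?_⟩
    obtain ⟨y, hy, h⟩ := hK x
    refine ⟨y, hy, fun j hj => ?_⟩
    have h2 := h (j + (1 - i).toNat) (by omega)
    rw [nsIter_g φ f hf₀ hf₁, Nat.add_sub_cancel] at h2
    exact h2
  · rintro ⟨K, hKc, hK⟩
    refine ⟨K, hKc, fun x => ?_⟩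
    obtain ⟨y, hy, h⟩ := hK x
    refine ⟨y, hy, fun j hj => ?_⟩
    rw [nsIter_g φ f hf₀ hf₁]
    exact h (j - (1 - i).toNat) (by omega)

lemma nsEntropy_g (φ : M ≃ₜ M) (f : ℤ → M ≃ₜ M)
    (hf₀ : ∀ i : ℤ, 0 ≤ i → f i = Homeomorph.refl M)
    (hf₁ : ∀ i : ℤ, i < 0 → f i = φ) (i : ℤ) :
    nsEntropy (fun j : ℤ => (f (-j)).symm) i = mapEntropy (⇑φ.symm) := by
  set m := (1 - i).toNat with hm
  have hψc : Continuous (⇑φ.symm) := φ.symm.continuous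
  have key := rSpan_g_eq φ f hf₀ hf₁ i
  unfold nsEntropy mapEntropy rGrowth
  apply le_antisymm
  · refine iSup₂_le fun ε hε => le_trans (Filter.limsup_le_limsup ?_) (le_iSup₂
      (f := fun (ε : ℝ) (_ : 0 < ε) =>
      Filter.atTop.limsup fun n : ℕ => ((Real.log (minSpanMap (⇑φ.symm) n ε) / n : ℝ) : EReal)) ε hε)
    filter_upwards [eventually_gt_atTop m] with n hn
    rw [EReal.coe_le_coe_iff]
    have h1 : rSpan (fun j : ℤ => (f (-j)).symm) i n ε ≤ minSpanMap (⇑φ.symm) n ε := by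
      rw [key n hn ε]
      exact minSpan_mono _ hψc (Nat.sub_le n m) hε
    exact div_le_div_of_nonneg_right (lognat_mono h1) (Nat.cast_nonneg _)
  · refine iSup₂_le fun ε hε => ?_
    obtain ⟨δ, hδ, hδε, hc⟩ := minSpan_add_le (⇑φ.symm) hψc m hε
    refine le_trans (Filter.limsup_le_limsup ?_) (le_iSup₂ (f := fun (ε : ℝ) (_ : 0 < ε) =>
      Filter.atTop.limsup fun n : ℕ =>
        ((Real.log (rSpan (fun j : ℤ => (f (-j)).symm) i n ε) / n : ℝ) : EReal)) δ hδ)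
    filter_upwards [eventually_gt_atTop m] with n hn
    rw [EReal.coe_le_coe_iff]
    have h1 : minSpanMap (⇑φ.symm) n ε ≤ rSpan (fun j : ℤ => (f (-j)).symm) i n δ := by
      rw [key n hn δ]
      have h2 := hc (n - m) (by omega)
      rwa [Nat.sub_add_cancel hn.le] at h2
    exact div_le_div_of_nonneg_right (lognat_mono h1) (Nat.cast_nonneg _)
end Aux

/-- let `φ` be a homeomorphism of a compact metric space `M` with `h(φ) ≠ 0`,
and let `f` be the non-autonomous dynamical system with `f_i = id` for `i ≥ 0` and `f_i = φ`
for `i < 0`. Then `H_i(f) = 0` for every `i`, while the inverse system `g_j = f_{-j}⁻¹`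
satisfies `H_i(g) = h(φ) ≠ 0` for every `i`; in particular the entropy of `f` differs from
the entropy of its inverse. -/
theorem nsEntropy_ne_nsEntropy_inverse [MetricSpace M] [CompactSpace M]
    (φ : M ≃ₜ M) (hφ : mapEntropy (⇑φ) ≠ 0)
    (f : ℤ → M ≃ₜ M)
    (hf₀ : ∀ i : ℤ, 0 ≤ i → f i = Homeomorph.refl M)
    (hf₁ : ∀ i : ℤ, i < 0 → f i = φ) :
    (∀ i : ℤ, nsEntropy f i = 0) ∧
    (∀ i : ℤ, nsEntropy (fun j : ℤ => (f (-j)).symm) i = mapEntropy (⇑φ)) ∧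
    (∀ i : ℤ, nsEntropy f i ≠ nsEntropy (fun j : ℤ => (f (-j)).symm) i) := by
  have h1 : ∀ i : ℤ, nsEntropy f i = 0 := nsEntropy_f_zero φ f hf₀ hf₁
  have h2 : ∀ i : ℤ, nsEntropy (fun j : ℤ => (f (-j)).symm) i = mapEntropy (⇑φ) := fun i =>
    (nsEntropy_g φ f hf₀ hf₁ i).trans (mapEntropy_symm φ)
  exact ⟨h1, h2, fun i => by rw [h1 i, h2 i]; exact Ne.symm hφ⟩
end
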